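/- Let 1 ≤ p < q < ∞, d ≥ 1, and 0 < ε < 1. Define on ℝ^d: f(x) = |x|^{-d/q}, w(x) = χ_{(1/ε, ∞)}(|x|)·f(x). Then the Morrey norms satisfy ‖w‖_{M^p_q} = ‖f‖_{M^p_q}. -/

import Mathlib

open MeasureTheory Metric ENNReal
open Filter Topology

/-- The small Morrey norm: sup over centers `a` and radii `R ∈ (0,1)` of
`|B(a,R)|^(1/q-1/p) (∫_{B(a,R)} |f|^p)^(1/p)`, valued in `ℝ≥0∞`. -/
noncomputable def smallMorreyNorm (d : ℕ) (p q : ℝ)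
    (f : EuclideanSpace ℝ (Fin d) → ℝ) : ℝ≥0∞ :=
  ⨆ (a : EuclideanSpace ℝ (Fin d)) (R : ℝ) (_ : 0 < R) (_ : R < 1),
    volume (ball a R) ^ (1 / q - 1 / p) *
      (∫⁻ y in ball a R, ENNReal.ofReal (|f y| ^ p)) ^ (1 / p)

/-- The (classical) Morrey norm: sup over all centers `a` and radii `R > 0`. -/
noncomputable def morreyNorm (d : ℕ) (p q : ℝ)
    (f : EuclideanSpace ℝ (Fin d) → ℝ) : ℝ≥0∞ :=
  ⨆ (a : EuclideanSpace ℝ (Fin d)) (R : ℝ) (_ : 0 < R),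
    volume (ball a R) ^ (1 / q - 1 / p) *
      (∫⁻ y in ball a R, ENNReal.ofReal (|f y| ^ p)) ^ (1 / p)

section Aux

variable {d : ℕ}

private lemma eucl_nontrivial (hd : 1 ≤ d) : Nontrivial (EuclideanSpace ℝ (Fin d)) := by
  haveI : Nonempty (Fin d) := ⟨⟨0, hd⟩⟩
  infer_instance

-- swap: balls centered at origin maximize
private lemma swap_le (hd : 1 ≤ d) (α : ℝ) (hα : 0 ≤ α) (a : EuclideanSpace ℝ (Fin d)) {R : ℝ}
    (hR : 0 < R) :
    ∫⁻ y in ball a R, ENNReal.ofReal (‖y‖ ^ (-α)) ≤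
      ∫⁻ y in ball (0 : EuclideanSpace ℝ (Fin d)) R, ENNReal.ofReal (‖y‖ ^ (-α)) := by
  haveI := eucl_nontrivial hd
  set g : EuclideanSpace ℝ (Fin d) → ℝ≥0∞ := fun y => ENNReal.ofReal (‖y‖ ^ (-α)) with hg
  have h0 : MeasurableSet (ball (0 : EuclideanSpace ℝ (Fin d)) R) := measurableSet_ball
  have ha : MeasurableSet (ball a R) := measurableSet_ball
  have hA := lintegral_inter_add_diff (μ := volume) g (ball a R) h0
  have hB := lintegral_inter_add_diff (μ := volume) g (ball (0 : EuclideanSpace ℝ (Fin d)) R) ha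
  have hμ : volume (ball a R \ ball (0:EuclideanSpace ℝ (Fin d)) R)
      = volume (ball (0:EuclideanSpace ℝ (Fin d)) R \ ball a R) := by
    have h1 := measure_inter_add_diff (μ := volume) (ball a R) h0
    have h2 := measure_inter_add_diff (μ := volume) (ball (0:EuclideanSpace ℝ (Fin d)) R) ha
    rw [Set.inter_comm] at h2
    have hc : volume (ball a R) = volume (ball (0:EuclideanSpace ℝ (Fin d)) R) :=
      Measure.addHaar_ball_center volume a R
    have hfin : volume (ball a R ∩ ball (0:EuclideanSpace ℝ (Fin d)) R) ≠ ⊤ :=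
      (lt_of_le_of_lt (measure_mono Set.inter_subset_left) measure_ball_lt_top).ne
    rw [hc] at h1
    exact (ENNReal.add_right_inj hfin).1 (h1.trans h2.symm)
  have hup : ∫⁻ y in ball a R \ ball (0:EuclideanSpace ℝ (Fin d)) R, g y ≤
      ENNReal.ofReal (R ^ (-α)) * volume (ball a R \ ball (0:EuclideanSpace ℝ (Fin d)) R) := by
    rw [← setLIntegral_const]
    refine setLIntegral_mono' (ha.diff h0) fun y hy => ?_
    have hyR : R ≤ ‖y‖ := by
      simpa [mem_ball, dist_zero_right, not_lt] using hy.2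
    exact ENNReal.ofReal_le_ofReal (Real.rpow_le_rpow_of_nonpos hR hyR (neg_nonpos.2 hα))
  have hlow : ENNReal.ofReal (R ^ (-α)) * volume (ball (0:EuclideanSpace ℝ (Fin d)) R \ ball a R)
      ≤ ∫⁻ y in ball (0:EuclideanSpace ℝ (Fin d)) R \ ball a R, g y := by
    have hz : volume (ball (0:EuclideanSpace ℝ (Fin d)) R \ ball a R)
        = volume ((ball (0:EuclideanSpace ℝ (Fin d)) R \ ball a R) \ {0}) :=
      (measure_diff_null (measure_singleton 0)).symm
    rw [hz, ← setLIntegral_const]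
    calc ∫⁻ _ in (ball (0:EuclideanSpace ℝ (Fin d)) R \ ball a R) \ {0},
          ENNReal.ofReal (R ^ (-α)) ∂volume
        ≤ ∫⁻ y in (ball (0:EuclideanSpace ℝ (Fin d)) R \ ball a R) \ {0}, g y ∂volume := by
          refine setLIntegral_mono' (((h0.diff ha)).diff (measurableSet_singleton 0))
            fun y hy => ?_
          have h0y : 0 < ‖y‖ := norm_pos_iff.2 (by simpa using hy.2)
          have h1y : ‖y‖ ≤ R := le_of_lt (by simpa [mem_ball, dist_zero_right] using hy.1.1)
          exact ENNReal.ofReal_le_ofReal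
            (Real.rpow_le_rpow_of_nonpos h0y h1y (neg_nonpos.2 hα))
      _ ≤ ∫⁻ y in ball (0:EuclideanSpace ℝ (Fin d)) R \ ball a R, g y ∂volume :=
          lintegral_mono_set Set.diff_subset
  calc ∫⁻ y in ball a R, g y
      = (∫⁻ y in ball a R ∩ ball (0:EuclideanSpace ℝ (Fin d)) R, g y)
        + ∫⁻ y in ball a R \ ball (0:EuclideanSpace ℝ (Fin d)) R, g y := hA.symm
    _ ≤ (∫⁻ y in ball a R ∩ ball (0:EuclideanSpace ℝ (Fin d)) R, g y)
        + ENNReal.ofReal (R ^ (-α)) * volume (ball a R \ ball (0:EuclideanSpace ℝ (Fin d)) R) :=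
        add_le_add_right hup _
    _ = (∫⁻ y in ball (0:EuclideanSpace ℝ (Fin d)) R ∩ ball a R, g y)
        + ENNReal.ofReal (R ^ (-α)) * volume (ball (0:EuclideanSpace ℝ (Fin d)) R \ ball a R) := by
        rw [Set.inter_comm, hμ]
    _ ≤ (∫⁻ y in ball (0:EuclideanSpace ℝ (Fin d)) R ∩ ball a R, g y)
        + ∫⁻ y in ball (0:EuclideanSpace ℝ (Fin d)) R \ ball a R, g y := add_le_add_right hlow _
    _ = ∫⁻ y in ball (0:EuclideanSpace ℝ (Fin d)) R, g y := hB

end Aux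

section Aux2
variable {d : ℕ}

private lemma scale_eq (α : ℝ) {T : ℝ} (hT : 0 < T) :
    ∫⁻ y in ball (0 : EuclideanSpace ℝ (Fin d)) T, ENNReal.ofReal (‖y‖ ^ (-α)) =
      ENNReal.ofReal (T ^ ((d:ℝ) - α)) *
        ∫⁻ y in ball (0 : EuclideanSpace ℝ (Fin d)) 1, ENNReal.ofReal (‖y‖ ^ (-α)) := by
  have hg : Measurable (fun y : EuclideanSpace ℝ (Fin d) => ENNReal.ofReal (‖y‖ ^ (-α))) := by
    fun_prop
  have hTd : (0:ℝ) < T ^ d := pow_pos hT d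
  have hmap := Measure.map_addHaar_smul (volume : Measure (EuclideanSpace ℝ (Fin d)))
    (r := T) hT.ne'
  rw [finrank_euclideanSpace_fin] at hmap
  have hvol : (volume : Measure (EuclideanSpace ℝ (Fin d)))
      = ENNReal.ofReal (T ^ d) • Measure.map (fun x : EuclideanSpace ℝ (Fin d) => T • x) volume := by
    rw [hmap, smul_smul, abs_of_pos (inv_pos.2 hTd), ← ENNReal.ofReal_mul hTd.le,
      mul_inv_cancel₀ hTd.ne', ENNReal.ofReal_one, one_smul]
  have hmeas : Measurable (fun x : EuclideanSpace ℝ (Fin d) => T • x) :=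
    (continuous_const_smul T).measurable
  have hpre : (fun x : EuclideanSpace ℝ (Fin d) => T • x) ⁻¹' ball 0 T = ball 0 1 := by
    ext x
    simp only [Set.mem_preimage, mem_ball_zero_iff, norm_smul, Real.norm_eq_abs, abs_of_pos hT]
    exact mul_lt_iff_lt_one_right hT
  conv_lhs => rw [hvol]
  rw [Measure.restrict_smul, lintegral_smul_measure,
    setLIntegral_map measurableSet_ball hg hmeas, hpre]
  have hpt : ∀ x : EuclideanSpace ℝ (Fin d),
      ENNReal.ofReal (‖T • x‖ ^ (-α)) = ENNReal.ofReal (T ^ (-α)) * ENNReal.ofReal (‖x‖ ^ (-α)) :=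
    fun x => by
      rw [norm_smul, Real.norm_eq_abs, abs_of_pos hT, Real.mul_rpow hT.le (norm_nonneg x),
        ENNReal.ofReal_mul (Real.rpow_nonneg hT.le _)]
  simp_rw [hpt]
  rw [lintegral_const_mul _ hg, smul_eq_mul, ← mul_assoc, ← ENNReal.ofReal_mul hTd.le]
  congr 2
  rw [sub_eq_add_neg, Real.rpow_add hT, Real.rpow_natCast]

end Aux2

section Aux3
variable {d : ℕ}

private lemma I_lt_top (hd : 1 ≤ d) {α : ℝ} (hα0 : 0 ≤ α) (hαd : α < d) :
    ∫⁻ y in ball (0 : EuclideanSpace ℝ (Fin d)) 1, ENNReal.ofReal (‖y‖ ^ (-α)) < ⊤ := by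
  haveI := eucl_nontrivial hd
  set g : EuclideanSpace ℝ (Fin d) → ℝ≥0∞ := fun y => ENNReal.ofReal (‖y‖ ^ (-α)) with hgdef
  set A : ℕ → Set (EuclideanSpace ℝ (Fin d)) :=
    fun n => ball 0 ((2⁻¹:ℝ)^n) \ ball 0 ((2⁻¹:ℝ)^(n+1)) with hAdef
  have hcover : ball (0:EuclideanSpace ℝ (Fin d)) 1 ⊆ {0} ∪ ⋃ n, A n := by
    intro x hx
    rcases eq_or_ne x 0 with h | h
    · exact Or.inl h
    · right
      have hx1 : ‖x‖ < 1 := by simpa [mem_ball_zero_iff] using hx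
      have hx0 : 0 < ‖x‖ := norm_pos_iff.2 h
      have hex : ∃ m, (2⁻¹:ℝ)^m ≤ ‖x‖ :=
        (exists_pow_lt_of_lt_one hx0 (by norm_num)).imp fun m hm => hm.le
      have hspec : (2⁻¹:ℝ)^(Nat.find hex) ≤ ‖x‖ := Nat.find_spec hex
      have hN0 : Nat.find hex ≠ 0 := by
        intro h0
        rw [h0, pow_zero] at hspec
        linarith
      obtain ⟨n, hn⟩ := Nat.exists_eq_succ_of_ne_zero hN0
      refine Set.mem_iUnion.2 ⟨n, ?_, ?_⟩
      · have hmin : ¬ ((2⁻¹:ℝ)^n ≤ ‖x‖) := Nat.find_min hex (by omega)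
        simpa [mem_ball_zero_iff] using lt_of_not_ge hmin
      · rw [hn] at hspec
        simp only [mem_ball_zero_iff, not_lt]
        simpa [Nat.succ_eq_add_one] using hspec
  have hsing : ∫⁻ y in ({0} : Set (EuclideanSpace ℝ (Fin d))), g y = 0 :=
    setLIntegral_measure_zero _ _ (measure_singleton 0)
  set ρ : ℝ≥0∞ := ENNReal.ofReal ((2⁻¹:ℝ) ^ ((d:ℝ) - α)) with hρdef
  set c : ℝ≥0∞ := ENNReal.ofReal ((2⁻¹:ℝ) ^ (-α)) with hcdef
  have hbound : ∀ n : ℕ, ∫⁻ y in A n, g y ≤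
      c * ρ^n * volume (ball (0:EuclideanSpace ℝ (Fin d)) 1) := by
    intro n
    have hpow : (0:ℝ) < (2⁻¹:ℝ)^(n+1) := by positivity
    have h1 : ∫⁻ y in A n, g y ≤
        ENNReal.ofReal (((2⁻¹:ℝ)^(n+1)) ^ (-α)) * volume (ball (0:EuclideanSpace ℝ (Fin d)) ((2⁻¹:ℝ)^n)) := by
      calc ∫⁻ y in A n, g y ≤ ∫⁻ _ in A n, ENNReal.ofReal (((2⁻¹:ℝ)^(n+1)) ^ (-α)) ∂volume := by
            refine setLIntegral_mono' (measurableSet_ball.diff measurableSet_ball) fun y hy => ?_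
            have hyl : (2⁻¹:ℝ)^(n+1) ≤ ‖y‖ := by
              simpa [mem_ball_zero_iff, not_lt] using hy.2
            exact ENNReal.ofReal_le_ofReal
              (Real.rpow_le_rpow_of_nonpos hpow hyl (neg_nonpos.2 hα0))
        _ = ENNReal.ofReal (((2⁻¹:ℝ)^(n+1)) ^ (-α)) * volume (A n) := setLIntegral_const _ _
        _ ≤ _ := by
            exact mul_le_mul_right (measure_mono Set.diff_subset) _
    rw [Measure.addHaar_ball volume 0 (by positivity : (0:ℝ) ≤ (2⁻¹:ℝ)^n),
      finrank_euclideanSpace_fin] at h1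
    refine h1.trans (le_of_eq ?_)
    rw [← mul_assoc, ← ENNReal.ofReal_mul (by positivity)]
    congr 2
    · rw [hcdef, hρdef, ← ENNReal.ofReal_pow (by positivity), ← ENNReal.ofReal_mul (by positivity)]
      congr 1
      have e1 : (((2⁻¹:ℝ)^(n+1)) : ℝ)^(-α) = (2⁻¹:ℝ) ^ ((((n:ℝ)+1)) * (-α)) := by
        rw [← Real.rpow_natCast (2⁻¹:ℝ) (n+1), ← Real.rpow_mul (by norm_num)]
        push_cast
        ring_nf
      have e2 : (((2⁻¹:ℝ)^n) : ℝ)^(d:ℕ) = (2⁻¹:ℝ) ^ ((n:ℝ)*(d:ℝ)) := by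
        rw [← Real.rpow_natCast (2⁻¹:ℝ) n,
          ← Real.rpow_natCast ((2⁻¹:ℝ) ^ ((n:ℕ):ℝ)) d, ← Real.rpow_mul (by norm_num)]
      have e3 : (((2⁻¹:ℝ)^((d:ℝ)-α)) : ℝ)^(n:ℕ) = (2⁻¹:ℝ) ^ (((d:ℝ)-α)*(n:ℝ)) := by
        rw [← Real.rpow_natCast ((2⁻¹:ℝ) ^ ((d:ℝ)-α)) n, ← Real.rpow_mul (by norm_num)]
      rw [e1, e2, e3, ← Real.rpow_add (by norm_num : (0:ℝ) < 2⁻¹),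
        ← Real.rpow_add (by norm_num : (0:ℝ) < 2⁻¹)]
      congr 1
      ring
  have hρ1 : ρ < 1 := by
    rw [hρdef, ENNReal.ofReal_lt_one]
    exact Real.rpow_lt_one (by norm_num) (by norm_num) (by linarith)
  calc ∫⁻ y in ball (0:EuclideanSpace ℝ (Fin d)) 1, g y
      ≤ ∫⁻ y in ({0} : Set (EuclideanSpace ℝ (Fin d))) ∪ ⋃ n, A n, g y :=
        lintegral_mono_set hcover
    _ ≤ (∫⁻ y in ({0} : Set (EuclideanSpace ℝ (Fin d))), g y) + ∫⁻ y in ⋃ n, A n, g y :=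
        lintegral_union_le _ _ _
    _ = ∫⁻ y in ⋃ n, A n, g y := by rw [hsing, zero_add]
    _ ≤ ∑' n, ∫⁻ y in A n, g y := lintegral_iUnion_le _ _
    _ ≤ ∑' n, (c * ρ^n * volume (ball (0:EuclideanSpace ℝ (Fin d)) 1)) :=
        ENNReal.tsum_le_tsum hbound
    _ = c * volume (ball (0:EuclideanSpace ℝ (Fin d)) 1) * ∑' n, ρ^n := by
        rw [← ENNReal.tsum_mul_left]
        congr 1 with n
        ring
    _ < ⊤ := by
        rw [ENNReal.tsum_geometric]
        refine ENNReal.mul_lt_top (ENNReal.mul_lt_top ?_ measure_ball_lt_top) ?_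
        · exact ENNReal.ofReal_lt_top
        · rw [ENNReal.inv_lt_top]
          rwa [tsub_pos_iff_lt]

private lemma I_pos (hd : 1 ≤ d) {α : ℝ} (hα0 : 0 ≤ α) :
    0 < ∫⁻ y in ball (0 : EuclideanSpace ℝ (Fin d)) 1, ENNReal.ofReal (‖y‖ ^ (-α)) := by
  haveI := eucl_nontrivial hd
  have hsub : ball (0:EuclideanSpace ℝ (Fin d)) 2⁻¹ ⊆ ball 0 1 := ball_subset_ball (by norm_num)
  have hmono : volume (ball (0:EuclideanSpace ℝ (Fin d)) 1 \ ball 0 2⁻¹)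
      ≤ ∫⁻ y in ball (0:EuclideanSpace ℝ (Fin d)) 1 \ ball 0 2⁻¹, ENNReal.ofReal (‖y‖ ^ (-α)) := by
    rw [← setLIntegral_one]
    refine setLIntegral_mono' (measurableSet_ball.diff measurableSet_ball) fun y hy => ?_
    have h2 : (2⁻¹:ℝ) ≤ ‖y‖ := by simpa [mem_ball_zero_iff, not_lt] using hy.2
    have h1 : ‖y‖ ≤ 1 := le_of_lt (by simpa [mem_ball_zero_iff] using hy.1)
    have := Real.one_le_rpow_of_pos_of_le_one_of_nonpos
      (lt_of_lt_of_le (by norm_num) h2) h1 (neg_nonpos.2 hα0)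
    exact ENNReal.one_le_ofReal.2 this
  have hann : 0 < volume (ball (0:EuclideanSpace ℝ (Fin d)) 1 \ ball 0 2⁻¹) := by
    rw [measure_diff hsub measurableSet_ball.nullMeasurableSet measure_ball_lt_top.ne,
      tsub_pos_iff_lt, Measure.addHaar_ball volume 0 (by norm_num : (0:ℝ) ≤ 2⁻¹),
      finrank_euclideanSpace_fin]
    calc ENNReal.ofReal ((2⁻¹:ℝ)^d) * volume (ball (0:EuclideanSpace ℝ (Fin d)) 1)
        < 1 * volume (ball (0:EuclideanSpace ℝ (Fin d)) 1) := by
          rw [mul_comm _ (volume _), mul_comm 1]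
          refine ENNReal.mul_lt_mul_right (measure_ball_pos volume (0:EuclideanSpace ℝ (Fin d)) one_pos).ne'
            measure_ball_lt_top.ne ?_
          exact ENNReal.ofReal_lt_one.2 (pow_lt_one₀ (by norm_num) (by norm_num) (by omega))
      _ = volume (ball (0:EuclideanSpace ℝ (Fin d)) 1) := one_mul _
  exact lt_of_lt_of_le (lt_of_lt_of_le hann hmono) (lintegral_mono_set Set.diff_subset)

end Aux3

section Aux4
variable {d : ℕ}

private lemma const_combine {p q α : ℝ} (hp0 : 0 < p) (hq0 : 0 < q)
    (hα : α = d * p / q) {R : ℝ} (hR : 0 < R) (V A : ℝ≥0∞) (hVt : V ≠ ⊤) (hAt : A ≠ ⊤) :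
    (ENNReal.ofReal (R ^ d) * V) ^ (1/q - 1/p) * (ENNReal.ofReal (R ^ ((d:ℝ) - α)) * A) ^ (1/p)
      = V ^ (1/q - 1/p) * A ^ (1/p) := by
  rw [ENNReal.mul_rpow_of_ne_top ENNReal.ofReal_ne_top hVt,
    ENNReal.mul_rpow_of_ne_top ENNReal.ofReal_ne_top hAt]
  have h1 : ENNReal.ofReal (R ^ d) ^ (1/q - 1/p) = ENNReal.ofReal R ^ ((d:ℝ) * (1/q - 1/p)) := by
    rw [ENNReal.ofReal_pow hR.le, ← ENNReal.rpow_natCast (ENNReal.ofReal R) d,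
      ← ENNReal.rpow_mul]
  have h2 : ENNReal.ofReal (R ^ ((d:ℝ) - α)) ^ (1/p)
      = ENNReal.ofReal R ^ (((d:ℝ) - α) * (1/p)) := by
    rw [← ENNReal.ofReal_rpow_of_pos hR, ← ENNReal.rpow_mul]
  have hz : (d:ℝ) * (1/q - 1/p) + ((d:ℝ) - α) * (1/p) = 0 := by
    subst hα
    field_simp
    ring
  have h3 : ENNReal.ofReal R ^ ((d:ℝ) * (1/q - 1/p)) * ENNReal.ofReal R ^ (((d:ℝ) - α) * (1/p))
      = 1 := by
    rw [← ENNReal.rpow_add _ _ (ENNReal.ofReal_pos.2 hR).ne' ENNReal.ofReal_ne_top, hz,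
      ENNReal.rpow_zero]
  rw [h1, h2]
  calc ENNReal.ofReal R ^ ((d:ℝ) * (1/q - 1/p)) * V ^ (1/q - 1/p) *
        (ENNReal.ofReal R ^ (((d:ℝ) - α) * (1/p)) * A ^ (1/p))
      = (ENNReal.ofReal R ^ ((d:ℝ) * (1/q - 1/p)) * ENNReal.ofReal R ^ (((d:ℝ) - α) * (1/p))) *
        (V ^ (1/q - 1/p) * A ^ (1/p)) := by ring
    _ = V ^ (1/q - 1/p) * A ^ (1/p) := by rw [h3, one_mul]

end Aux4

/-- with `f(x) = |x|^{-d/q}` and `w = χ_{(1/ε,∞)}(|·|) f`, the Morrey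
norms satisfy `‖w‖_{M^p_q} = ‖f‖_{M^p_q}`. -/
theorem morreyNorm_tail_eq (d : ℕ) (p q : ℝ) (hp : 1 ≤ p) (hpq : p < q) (hd : 1 ≤ d)
    (ε : ℝ) (hε0 : 0 < ε) (hε1 : ε < 1) :
    letI f : EuclideanSpace ℝ (Fin d) → ℝ := fun x => ‖x‖ ^ (-(d : ℝ) / q)
    letI w : EuclideanSpace ℝ (Fin d) → ℝ :=
      fun x => if 1 / ε < ‖x‖ then f x else 0
    morreyNorm d p q w = morreyNorm d p q f := by
  show morreyNorm d p q (fun x => if 1/ε < ‖x‖ then ‖x‖ ^ (-(d:ℝ)/q) else 0)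
      = morreyNorm d p q (fun x => ‖x‖ ^ (-(d:ℝ)/q))
  haveI := eucl_nontrivial hd
  have hp0 : 0 < p := lt_of_lt_of_le one_pos hp
  have hq0 : 0 < q := lt_trans hp0 hpq
  have hd0 : (0:ℝ) < d := by exact_mod_cast Nat.lt_of_lt_of_le Nat.zero_lt_one hd
  have hα0 : 0 ≤ (d:ℝ) * p / q := by positivity
  have hαd : (d:ℝ) * p / q < (d:ℝ) := by
    rw [div_lt_iff₀ hq0]
    exact (mul_lt_mul_iff_right₀ hd0).2 hpq
  have hεpos : 0 < 1/ε := by positivity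
  have hf_eq : ∀ y : EuclideanSpace ℝ (Fin d),
      ENNReal.ofReal (|‖y‖ ^ (-(d:ℝ)/q)| ^ p) = ENNReal.ofReal (‖y‖ ^ (-((d:ℝ) * p / q))) := by
    intro y
    rw [abs_of_nonneg (Real.rpow_nonneg (norm_nonneg y) _), ← Real.rpow_mul (norm_nonneg y)]
    congr 1
    ring
  have hA0 : (∫⁻ y in ball (0:EuclideanSpace ℝ (Fin d)) 1,
      ENNReal.ofReal (‖y‖ ^ (-((d:ℝ) * p / q)))) ≠ 0 := (I_pos hd hα0).ne'
  have hAt : (∫⁻ y in ball (0:EuclideanSpace ℝ (Fin d)) 1,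
      ENNReal.ofReal (‖y‖ ^ (-((d:ℝ) * p / q)))) ≠ ⊤ := (I_lt_top hd hα0 hαd).ne
  have hV1t : volume (ball (0:EuclideanSpace ℝ (Fin d)) 1) ≠ ⊤ := measure_ball_lt_top.ne
  -- upper bound for f
  have hup : morreyNorm d p q (fun x => ‖x‖ ^ (-(d:ℝ)/q)) ≤
      volume (ball (0:EuclideanSpace ℝ (Fin d)) 1) ^ (1/q - 1/p) *
        (∫⁻ y in ball (0:EuclideanSpace ℝ (Fin d)) 1,
          ENNReal.ofReal (‖y‖ ^ (-((d:ℝ) * p / q)))) ^ (1/p) := by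
    unfold morreyNorm
    refine iSup_le fun a => iSup_le fun R => iSup_le fun hR => ?_
    simp only [hf_eq]
    have hvol : volume (ball a R) =
        ENNReal.ofReal (R ^ d) * volume (ball (0:EuclideanSpace ℝ (Fin d)) 1) := by
      rw [Measure.addHaar_ball_center volume a R, Measure.addHaar_ball volume 0 hR.le,
        finrank_euclideanSpace_fin]
    calc volume (ball a R) ^ (1/q - 1/p) *
          (∫⁻ y in ball a R, ENNReal.ofReal (‖y‖ ^ (-((d:ℝ) * p / q)))) ^ (1/p)
        ≤ (ENNReal.ofReal (R ^ d) * volume (ball (0:EuclideanSpace ℝ (Fin d)) 1)) ^ (1/q - 1/p) *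
          (ENNReal.ofReal (R ^ ((d:ℝ) - (d:ℝ) * p / q)) *
            ∫⁻ y in ball (0:EuclideanSpace ℝ (Fin d)) 1,
              ENNReal.ofReal (‖y‖ ^ (-((d:ℝ) * p / q)))) ^ (1/p) := by
          rw [hvol]
          refine mul_le_mul_right (ENNReal.rpow_le_rpow ?_ (by positivity)) _
          exact le_trans (swap_le hd _ hα0 a hR) (le_of_eq (scale_eq _ hR))
      _ = _ := const_combine hp0 hq0 rfl hR _ _ hV1t hAt
  -- w ≤ f pointwise
  have hwf : morreyNorm d p q (fun x => if 1/ε < ‖x‖ then ‖x‖ ^ (-(d:ℝ)/q) else 0) ≤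
      morreyNorm d p q (fun x => ‖x‖ ^ (-(d:ℝ)/q)) := by
    unfold morreyNorm
    refine iSup_mono fun a => iSup_mono fun R => iSup_mono fun hR => ?_
    refine mul_le_mul_right (ENNReal.rpow_le_rpow (lintegral_mono fun y => ?_) (by positivity)) _
    refine ENNReal.ofReal_le_ofReal (Real.rpow_le_rpow (abs_nonneg _) ?_ hp0.le)
    dsimp only
    split_ifs with h
    · exact le_rfl
    · simpa using abs_nonneg (‖y‖ ^ (-(d:ℝ)/q))
  -- lower bound for w
  have hlow : volume (ball (0:EuclideanSpace ℝ (Fin d)) 1) ^ (1/q - 1/p) *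
      (∫⁻ y in ball (0:EuclideanSpace ℝ (Fin d)) 1,
        ENNReal.ofReal (‖y‖ ^ (-((d:ℝ) * p / q)))) ^ (1/p) ≤
      morreyNorm d p q (fun x => if 1/ε < ‖x‖ then ‖x‖ ^ (-(d:ℝ)/q) else 0) := by
    have hCt : (∫⁻ y in closedBall (0:EuclideanSpace ℝ (Fin d)) (1/ε),
        ENNReal.ofReal (‖y‖ ^ (-((d:ℝ) * p / q)))) < ⊤ := by
      refine lt_of_le_of_lt
        (lintegral_mono_set (closedBall_subset_ball (by linarith : 1/ε < 1/ε + 1))) ?_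
      rw [scale_eq _ (by positivity : (0:ℝ) < 1/ε + 1)]
      exact ENNReal.mul_lt_top ENNReal.ofReal_lt_top (I_lt_top hd hα0 hαd)
    refine le_of_forall_lt fun c hc => ?_
    have h1 : Tendsto (fun n : ℕ => (1 - 1/((n:ℝ)+1))) atTop (𝓝 1) := by
      simpa using (tendsto_const_nhds (x := (1:ℝ))).sub tendsto_one_div_add_atTop_nhds_zero_nat
    have htend : Tendsto (fun n : ℕ => ENNReal.ofReal (1 - 1/((n:ℝ)+1)) *
        (volume (ball (0:EuclideanSpace ℝ (Fin d)) 1) ^ (1/q - 1/p) *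
          (∫⁻ y in ball (0:EuclideanSpace ℝ (Fin d)) 1,
            ENNReal.ofReal (‖y‖ ^ (-((d:ℝ) * p / q)))) ^ (1/p))) atTop
        (𝓝 (volume (ball (0:EuclideanSpace ℝ (Fin d)) 1) ^ (1/q - 1/p) *
          (∫⁻ y in ball (0:EuclideanSpace ℝ (Fin d)) 1,
            ENNReal.ofReal (‖y‖ ^ (-((d:ℝ) * p / q)))) ^ (1/p))) := by
      have h2 := ENNReal.Tendsto.mul_const (ENNReal.tendsto_ofReal h1)
        (b := volume (ball (0:EuclideanSpace ℝ (Fin d)) 1) ^ (1/q - 1/p) *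
          (∫⁻ y in ball (0:EuclideanSpace ℝ (Fin d)) 1,
            ENNReal.ofReal (‖y‖ ^ (-((d:ℝ) * p / q)))) ^ (1/p))
        (Or.inl (by simp : (ENNReal.ofReal 1) ≠ 0))
      simpa using h2
    obtain ⟨n, hn⟩ := (htend.eventually (lt_mem_nhds hc)).exists
    have hδ0 : 0 < 1/((n:ℝ)+1) := by positivity
    have hItend : Tendsto (fun T : ℝ => ENNReal.ofReal (1/((n:ℝ)+1)) *
        (ENNReal.ofReal (T ^ ((d:ℝ) - (d:ℝ) * p / q)) *
          ∫⁻ y in ball (0:EuclideanSpace ℝ (Fin d)) 1,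
            ENNReal.ofReal (‖y‖ ^ (-((d:ℝ) * p / q))))) atTop (𝓝 ⊤) := by
      have ha : Tendsto (fun T:ℝ => ENNReal.ofReal (T ^ ((d:ℝ) - (d:ℝ) * p / q))) atTop (𝓝 ⊤) :=
        ENNReal.tendsto_ofReal_atTop.comp (tendsto_rpow_atTop (by linarith))
      have hb := ENNReal.Tendsto.mul_const ha
        (b := ∫⁻ y in ball (0:EuclideanSpace ℝ (Fin d)) 1,
          ENNReal.ofReal (‖y‖ ^ (-((d:ℝ) * p / q)))) (Or.inl ENNReal.top_ne_zero)
      rw [ENNReal.top_mul hA0] at hb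
      have hcm := ENNReal.Tendsto.const_mul (a := ENNReal.ofReal (1/((n:ℝ)+1))) hb
        (Or.inl ENNReal.top_ne_zero)
      rwa [ENNReal.mul_top (ENNReal.ofReal_pos.2 hδ0).ne'] at hcm
    obtain ⟨T, hT1, hTC⟩ :=
      ((eventually_ge_atTop (1:ℝ)).and (hItend.eventually (lt_mem_nhds hCt))).exists
    have hT0 : (0:ℝ) < T := lt_of_lt_of_le one_pos hT1
    have hITt : (ENNReal.ofReal (T ^ ((d:ℝ) - (d:ℝ)*p/q)) *
        ∫⁻ y in ball (0:EuclideanSpace ℝ (Fin d)) 1,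
          ENNReal.ofReal (‖y‖ ^ (-((d:ℝ)*p/q)))) ≠ ⊤ :=
      ENNReal.mul_ne_top ENNReal.ofReal_ne_top hAt
    have hwint : (ENNReal.ofReal (T ^ ((d:ℝ) - (d:ℝ)*p/q)) *
        ∫⁻ y in ball (0:EuclideanSpace ℝ (Fin d)) 1, ENNReal.ofReal (‖y‖ ^ (-((d:ℝ)*p/q)))) -
        (∫⁻ y in closedBall (0:EuclideanSpace ℝ (Fin d)) (1/ε),
          ENNReal.ofReal (‖y‖ ^ (-((d:ℝ)*p/q)))) ≤
        ∫⁻ y in ball (0:EuclideanSpace ℝ (Fin d)) T,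
          ENNReal.ofReal (|if 1/ε < ‖y‖ then ‖y‖ ^ (-(d:ℝ)/q) else 0| ^ p) := by
      rw [← scale_eq _ hT0]
      have hsplit := lintegral_inter_add_diff (μ := volume) (B := closedBall 0 (1/ε))
        (fun y : EuclideanSpace ℝ (Fin d) => ENNReal.ofReal (‖y‖ ^ (-((d:ℝ)*p/q))))
        (ball (0:EuclideanSpace ℝ (Fin d)) T) measurableSet_closedBall
      have hinter : ∫⁻ y in ball (0:EuclideanSpace ℝ (Fin d)) T ∩ closedBall 0 (1/ε),
          ENNReal.ofReal (‖y‖ ^ (-((d:ℝ)*p/q))) ≤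
          ∫⁻ y in closedBall (0:EuclideanSpace ℝ (Fin d)) (1/ε),
            ENNReal.ofReal (‖y‖ ^ (-((d:ℝ)*p/q))) :=
        lintegral_mono_set Set.inter_subset_right
      have hdiffeq : (∫⁻ y in ball (0:EuclideanSpace ℝ (Fin d)) T \ closedBall 0 (1/ε),
          ENNReal.ofReal (‖y‖ ^ (-((d:ℝ)*p/q))))
          = ∫⁻ y in ball (0:EuclideanSpace ℝ (Fin d)) T \ closedBall 0 (1/ε),
            ENNReal.ofReal (|if 1/ε < ‖y‖ then ‖y‖ ^ (-(d:ℝ)/q) else 0| ^ p) := by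
        refine setLIntegral_congr_fun (measurableSet_ball.diff measurableSet_closedBall)
          (fun y hy => ?_)
        have hyε : 1/ε < ‖y‖ := by simpa [mem_closedBall_zero_iff, not_le] using hy.2
        rw [if_pos hyε, hf_eq y]
      refine tsub_le_iff_right.2 ?_
      calc ∫⁻ y in ball (0:EuclideanSpace ℝ (Fin d)) T, ENNReal.ofReal (‖y‖ ^ (-((d:ℝ)*p/q)))
          = (∫⁻ y in ball (0:EuclideanSpace ℝ (Fin d)) T ∩ closedBall 0 (1/ε),
              ENNReal.ofReal (‖y‖ ^ (-((d:ℝ)*p/q))))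
            + ∫⁻ y in ball (0:EuclideanSpace ℝ (Fin d)) T \ closedBall 0 (1/ε),
              ENNReal.ofReal (‖y‖ ^ (-((d:ℝ)*p/q))) := hsplit.symm
        _ ≤ (∫⁻ y in ball (0:EuclideanSpace ℝ (Fin d)) T \ closedBall 0 (1/ε),
              ENNReal.ofReal (|if 1/ε < ‖y‖ then ‖y‖ ^ (-(d:ℝ)/q) else 0| ^ p))
            + ∫⁻ y in closedBall (0:EuclideanSpace ℝ (Fin d)) (1/ε),
              ENNReal.ofReal (‖y‖ ^ (-((d:ℝ)*p/q))) := by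
            rw [add_comm, hdiffeq]
            exact add_le_add_right hinter _
        _ ≤ (∫⁻ y in ball (0:EuclideanSpace ℝ (Fin d)) T,
              ENNReal.ofReal (|if 1/ε < ‖y‖ then ‖y‖ ^ (-(d:ℝ)/q) else 0| ^ p))
            + ∫⁻ y in closedBall (0:EuclideanSpace ℝ (Fin d)) (1/ε),
              ENNReal.ofReal (‖y‖ ^ (-((d:ℝ)*p/q))) :=
            add_le_add_left (lintegral_mono_set Set.diff_subset) _
    have hconst := const_combine (d := d) hp0 hq0 rfl hT0
      (volume (ball (0:EuclideanSpace ℝ (Fin d)) 1))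
      (∫⁻ y in ball (0:EuclideanSpace ℝ (Fin d)) 1, ENNReal.ofReal (‖y‖ ^ (-((d:ℝ)*p/q))))
      hV1t hAt
    have hvolT : volume (ball (0:EuclideanSpace ℝ (Fin d)) T)
        = ENNReal.ofReal (T ^ d) * volume (ball (0:EuclideanSpace ℝ (Fin d)) 1) := by
      rw [Measure.addHaar_ball volume 0 hT0.le, finrank_euclideanSpace_fin]
    have hkey : ENNReal.ofReal (1 - 1/((n:ℝ)+1)) *
        ((ENNReal.ofReal (T ^ ((d:ℝ) - (d:ℝ)*p/q)) *
          ∫⁻ y in ball (0:EuclideanSpace ℝ (Fin d)) 1,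
            ENNReal.ofReal (‖y‖ ^ (-((d:ℝ)*p/q)))) ^ (1/p)) ≤
        ((ENNReal.ofReal (T ^ ((d:ℝ) - (d:ℝ)*p/q)) *
          ∫⁻ y in ball (0:EuclideanSpace ℝ (Fin d)) 1,
            ENNReal.ofReal (‖y‖ ^ (-((d:ℝ)*p/q)))) -
          (∫⁻ y in closedBall (0:EuclideanSpace ℝ (Fin d)) (1/ε),
            ENNReal.ofReal (‖y‖ ^ (-((d:ℝ)*p/q))))) ^ (1/p) := by
      have e0 : ENNReal.ofReal (1 - 1/((n:ℝ)+1)) = 1 - ENNReal.ofReal (1/((n:ℝ)+1)) := by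
        rw [ENNReal.ofReal_sub _ hδ0.le, ENNReal.ofReal_one]
      have e1 : (1 - ENNReal.ofReal (1/((n:ℝ)+1)))
          ≤ (1 - ENNReal.ofReal (1/((n:ℝ)+1))) ^ (1/p) := by
        nth_rewrite 1 [← ENNReal.rpow_one (1 - ENNReal.ofReal (1/((n:ℝ)+1)))]
        exact ENNReal.rpow_le_rpow_of_exponent_ge tsub_le_self (by rw [div_le_one hp0]; exact hp)
      have e2 : (1 - ENNReal.ofReal (1/((n:ℝ)+1))) ≠ ⊤ :=
        (lt_of_le_of_lt tsub_le_self one_lt_top).ne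
      rw [e0]
      calc (1 - ENNReal.ofReal (1/((n:ℝ)+1))) *
          ((ENNReal.ofReal (T ^ ((d:ℝ) - (d:ℝ)*p/q)) *
            ∫⁻ y in ball (0:EuclideanSpace ℝ (Fin d)) 1,
              ENNReal.ofReal (‖y‖ ^ (-((d:ℝ)*p/q)))) ^ (1/p))
          ≤ (1 - ENNReal.ofReal (1/((n:ℝ)+1))) ^ (1/p) *
            ((ENNReal.ofReal (T ^ ((d:ℝ) - (d:ℝ)*p/q)) *
              ∫⁻ y in ball (0:EuclideanSpace ℝ (Fin d)) 1,
                ENNReal.ofReal (‖y‖ ^ (-((d:ℝ)*p/q)))) ^ (1/p)) := mul_le_mul_left e1 _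
        _ = ((1 - ENNReal.ofReal (1/((n:ℝ)+1))) *
            (ENNReal.ofReal (T ^ ((d:ℝ) - (d:ℝ)*p/q)) *
              ∫⁻ y in ball (0:EuclideanSpace ℝ (Fin d)) 1,
                ENNReal.ofReal (‖y‖ ^ (-((d:ℝ)*p/q))))) ^ (1/p) :=
            (ENNReal.mul_rpow_of_ne_top e2 hITt _).symm
        _ ≤ _ := by
            refine ENNReal.rpow_le_rpow ?_ (by positivity)
            rw [ENNReal.sub_mul (fun _ _ => hITt), one_mul]
            exact tsub_le_tsub_left hTC.le _
    calc c < ENNReal.ofReal (1 - 1/((n:ℝ)+1)) *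
          (volume (ball (0:EuclideanSpace ℝ (Fin d)) 1) ^ (1/q - 1/p) *
            (∫⁻ y in ball (0:EuclideanSpace ℝ (Fin d)) 1,
              ENNReal.ofReal (‖y‖ ^ (-((d:ℝ)*p/q)))) ^ (1/p)) := hn
      _ = ENNReal.ofReal (1 - 1/((n:ℝ)+1)) *
          ((ENNReal.ofReal (T ^ d) * volume (ball (0:EuclideanSpace ℝ (Fin d)) 1)) ^ (1/q - 1/p) *
            ((ENNReal.ofReal (T ^ ((d:ℝ) - (d:ℝ)*p/q)) *
              ∫⁻ y in ball (0:EuclideanSpace ℝ (Fin d)) 1,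
                ENNReal.ofReal (‖y‖ ^ (-((d:ℝ)*p/q)))) ^ (1/p))) := by rw [hconst]
      _ = (ENNReal.ofReal (T ^ d) * volume (ball (0:EuclideanSpace ℝ (Fin d)) 1)) ^ (1/q - 1/p) *
          (ENNReal.ofReal (1 - 1/((n:ℝ)+1)) *
            ((ENNReal.ofReal (T ^ ((d:ℝ) - (d:ℝ)*p/q)) *
              ∫⁻ y in ball (0:EuclideanSpace ℝ (Fin d)) 1,
                ENNReal.ofReal (‖y‖ ^ (-((d:ℝ)*p/q)))) ^ (1/p))) := by ring
      _ ≤ (ENNReal.ofReal (T ^ d) * volume (ball (0:EuclideanSpace ℝ (Fin d)) 1)) ^ (1/q - 1/p) *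
          (((ENNReal.ofReal (T ^ ((d:ℝ) - (d:ℝ)*p/q)) *
            ∫⁻ y in ball (0:EuclideanSpace ℝ (Fin d)) 1,
              ENNReal.ofReal (‖y‖ ^ (-((d:ℝ)*p/q)))) -
            (∫⁻ y in closedBall (0:EuclideanSpace ℝ (Fin d)) (1/ε),
              ENNReal.ofReal (‖y‖ ^ (-((d:ℝ)*p/q))))) ^ (1/p)) := mul_le_mul_right hkey _
      _ ≤ (ENNReal.ofReal (T ^ d) * volume (ball (0:EuclideanSpace ℝ (Fin d)) 1)) ^ (1/q - 1/p) *
          ((∫⁻ y in ball (0:EuclideanSpace ℝ (Fin d)) T,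
            ENNReal.ofReal (|if 1/ε < ‖y‖ then ‖y‖ ^ (-(d:ℝ)/q) else 0| ^ p)) ^ (1/p)) :=
          mul_le_mul_right (ENNReal.rpow_le_rpow hwint (by positivity)) _
      _ = volume (ball (0:EuclideanSpace ℝ (Fin d)) T) ^ (1/q - 1/p) *
          ((∫⁻ y in ball (0:EuclideanSpace ℝ (Fin d)) T,
            ENNReal.ofReal (|if 1/ε < ‖y‖ then ‖y‖ ^ (-(d:ℝ)/q) else 0| ^ p)) ^ (1/p)) := by
          rw [hvolT]
      _ ≤ morreyNorm d p q (fun x => if 1/ε < ‖x‖ then ‖x‖ ^ (-(d:ℝ)/q) else 0) := by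
          unfold morreyNorm
          exact le_iSup_of_le 0 (le_iSup_of_le T (le_iSup_of_le hT0 le_rfl))
  exact le_antisymm hwf (hup.trans hlow)
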